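/- Let K be a field and let (f_i)_{i≥0} be a sequence of elements of K. Assume there exists an integer m > 0 and an integer K₀ such that for all integers k_1, …, k_m ≥ K₀, the m × m matrix whose (i,j) entry is f_{k_i − j} (for 1 ≤ i, j ≤ m) has determinant zero. Then the power series f = ∑_{i≥0} f_i t^i ∈ K[[t]] can be expressed in the form a/b with a, b ∈ K[t], b ≠ 0, and deg b ≤ m − 1; that is, there exists a nonzero polynomial b ∈ K[t] of degree at most m − 1 such that b·f is a polynomial. -/

import Mathlib

/-- Let `(f_i)` be a sequence in a field `K`, and suppose there are `m > 0` and `K₀` such that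
for all `k_1, …, k_m ≥ K₀` (with each `k_i ≥ m`, so that the indices below are non-negative)
the `m × m` matrix `(f_{k_i − j})_{1 ≤ i,j ≤ m}` has determinant zero.  Then
`f = ∑ f_i t^i` can be written as `a/b` with `a, b ∈ K[t]`, `b ≠ 0` and `deg b ≤ m − 1`. -/
theorem power_series_rational_of_eventually_vanishing_determinants
    (K : Type*) [Field K] (f : ℕ → K) (m : ℕ) (hm : 0 < m) (K₀ : ℕ)
    (hdet : ∀ k : Fin m → ℕ, (∀ i, K₀ ≤ k i) → (∀ i, m ≤ k i) →
      Matrix.det (Matrix.of fun i j : Fin m => f (k i - ((j : ℕ) + 1))) = 0) :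
    ∃ a b : Polynomial K, b ≠ 0 ∧ b.natDegree ≤ m - 1 ∧
      (b : PowerSeries K) * PowerSeries.mk f = (a : PowerSeries K) := by
  classical
  set N := max K₀ m with hNdef
  have hNK₀ : K₀ ≤ N := le_max_left _ _
  have hNm : m ≤ N := le_max_right _ _
  set w : ℕ → (Fin m → K) := fun n j => f (n + N - ((j : ℕ) + 1)) with hw
  -- Step 1: the span of the w's is not everything
  have hspan : Submodule.span K (Set.range w) ≠ ⊤ := by
    intro htop
    obtain ⟨s, hs_sub, hs_span, hs_li⟩ := exists_linearIndependent K (Set.range w)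
    rw [htop] at hs_span
    have hfin : s.Finite := hs_li.setFinite
    have : Fintype s := hfin.fintype
    have hbasis : Module.Basis s K (Fin m → K) := Module.Basis.mk hs_li (by rw [Subtype.range_coe]; rw [hs_span])
    have hcard : Fintype.card s = m := by
      have := Module.finrank_eq_card_basis hbasis
      rw [Module.finrank_fin_fun] at this
      omega
    let e : Fin m ≃ s := (Fintype.equivFinOfCardEq hcard).symm
    have hchoice : ∀ i : Fin m, ∃ n : ℕ, w n = (e i : Fin m → K) := fun i => hs_sub (e i).2
    choose k hk using hchoice
    set A : Matrix (Fin m) (Fin m) K :=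
      Matrix.of (fun i j : Fin m => f ((k i + N) - ((j : ℕ) + 1))) with hA
    have hrows : ∀ i, A i = (e i : Fin m → K) := fun i => hk i
    have hli : LinearIndependent K (fun i => A i) := by
      have : LinearIndependent K (fun i : Fin m => ((e i : Fin m → K))) :=
        hs_li.comp e (Equiv.injective e)
      simpa [funext hrows] using this
    have hunit : IsUnit A := Matrix.linearIndependent_rows_iff_isUnit.mp hli
    have hdne : A.det ≠ 0 := by
      intro h0
      rw [Matrix.isUnit_iff_isUnit_det, h0] at hunit
      exact not_isUnit_zero hunit
    exact hdne (hdet (fun i => k i + N) (fun i => le_add_self.trans' hNK₀)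
      (fun i => le_add_self.trans' hNm))
  -- Step 2: get a nonzero functional vanishing on all w n
  have hlt : Submodule.span K (Set.range w) < ⊤ := lt_top_iff_ne_top.mpr hspan
  obtain ⟨φ, hφne, hφmap⟩ :=
    (Submodule.span K (Set.range w)).exists_dual_map_eq_bot_of_lt_top hlt inferInstance
  have hφw : ∀ n, φ (w n) = 0 := by
    intro n
    have : φ (w n) ∈ (Submodule.span K (Set.range w)).map φ :=
      Submodule.mem_map_of_mem (Submodule.subset_span ⟨n, rfl⟩)
    rw [hφmap] at this
    exact (Submodule.mem_bot K).mp this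
  set c : Fin m → K := fun j => φ (fun i => if j = i then 1 else 0) with hc
  have hcne : ∃ j, c j ≠ 0 := by
    by_contra hall
    push_neg at hall
    apply hφne
    apply LinearMap.ext
    intro x
    rw [LinearMap.pi_apply_eq_sum_univ φ x]
    have h0 : ∀ j : Fin m, (φ fun i => if j = i then 1 else 0) = 0 := hall
    simp [h0]
  have hrec : ∀ n, ∑ j : Fin m, f (n + N - ((j : ℕ) + 1)) * c j = 0 := by
    intro n
    have := hφw n
    rw [LinearMap.pi_apply_eq_sum_univ φ (w n)] at this
    simpa [hw, smul_eq_mul, ← hc] using this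
  -- the polynomial b
  set b : Polynomial K := ∑ j : Fin m, Polynomial.C (c j) * Polynomial.X ^ (j : ℕ) with hb
  have hbcoeff : ∀ p : ℕ, b.coeff p = if h : p < m then c ⟨p, h⟩ else 0 := by
    intro p
    rw [hb, Polynomial.finset_sum_coeff]
    simp only [Polynomial.coeff_C_mul, Polynomial.coeff_X_pow, mul_ite, mul_one, mul_zero]
    split
    · next h =>
      rw [Finset.sum_eq_single (⟨p, h⟩ : Fin m)]
      · simp
      · intro j _ hj
        have : (j : ℕ) ≠ p := fun he => hj (by ext; simp [he])
        simp [Ne.symm this]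
      · simp
    · next h =>
      apply Finset.sum_eq_zero
      intro j _
      have : (j : ℕ) ≠ p := by omega
      simp [Ne.symm this]
  have hbne : b ≠ 0 := by
    obtain ⟨j, hj⟩ := hcne
    intro h0
    have := hbcoeff (j : ℕ)
    rw [h0] at this
    simp only [Polynomial.coeff_zero] at this
    rw [dif_pos j.isLt] at this
    exact hj (by simpa [Fin.eta] using this.symm)
  have hbdeg : b.natDegree ≤ m - 1 := by
    rw [hb]
    apply Polynomial.natDegree_sum_le_of_forall_le
    intro j _
    refine (Polynomial.natDegree_C_mul_le _ _).trans ?_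
    rw [Polynomial.natDegree_X_pow]
    omega
  -- coefficients of b * f vanish from N on
  set g : PowerSeries K := (b : PowerSeries K) * PowerSeries.mk f with hg
  have hgcoeff : ∀ n, N ≤ n + 1 → PowerSeries.coeff n g = 0 := by
    intro n hn
    rw [hg, PowerSeries.coeff_mul, Finset.Nat.sum_antidiagonal_eq_sum_range_succ_mk]
    have hmn : m ≤ n + 1 := hNm.trans hn
    have hsub : ∑ p ∈ Finset.range (n + 1), (PowerSeries.coeff p) (b : PowerSeries K)
        * (PowerSeries.coeff (n - p)) (PowerSeries.mk f)
        = ∑ p ∈ Finset.range m, b.coeff p * f (n - p) := by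
      rw [← Finset.sum_subset (Finset.range_subset_range.mpr hmn)]
      · apply Finset.sum_congr rfl
        intro p _
        rw [Polynomial.coeff_coe, PowerSeries.coeff_mk]
      · intro p _ hp
        simp only [Finset.mem_range, not_lt] at hp
        rw [Polynomial.coeff_coe, hbcoeff]
        rw [dif_neg (by omega)]
        simp
    rw [hsub, Finset.sum_range fun p => b.coeff p * f (n - p)]
    have := hrec (n + 1 - N)
    have harith : ∀ j : Fin m, n + 1 - N + N - ((j : ℕ) + 1) = n - (j : ℕ) := by
      intro j; omega
    rw [← this]
    apply Finset.sum_congr rfl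
    intro j _
    rw [hbcoeff, dif_pos j.isLt, harith j, mul_comm]
  -- conclude
  refine ⟨PowerSeries.trunc N g, b, hbne, hbdeg, ?_⟩
  rw [← hg]
  apply PowerSeries.ext
  intro n
  rw [Polynomial.coeff_coe, PowerSeries.coeff_trunc]
  split
  · rfl
  · next h => exact hgcoeff n (by omega)
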